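/- Hopf lemma for the disc: Let u be a real-valued function on the closed unit disc D̄ ⊆ ℝ², continuous on D̄, harmonic and nonconstant on D, with u > 0 on D and u(P) = 0 at a boundary point P. Then there exists c' > 0 such that for all r < 1 close enough to 1, (u(rP) - u(P))/(r-1) ≤ -c'; in particular the outward normal derivative of u at P, if it exists, is strictly negative. -/

import Mathlib

open Metric

/-- The Laplacian of a function `u : ℂ → ℝ`, identifying `ℂ` with `ℝ²`:
`Δu = ∂²u/∂x² + ∂²u/∂y²`. -/
noncomputable def laplacian (u : ℂ → ℝ) (z : ℂ) : ℝ :=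
  fderiv ℝ (fun w => fderiv ℝ u w 1) z 1 +
    fderiv ℝ (fun w => fderiv ℝ u w Complex.I) z Complex.I

section Aux
open Complex
open scoped NNReal ENNReal

/-- helper: an ℝ-linear CLM on ℂ is determined by its values at 1 and I. -/
lemma clm_complex_ext {F : Type*} [NormedAddCommGroup F] [NormedSpace ℝ F]
    (S T : ℂ →L[ℝ] F) (h1 : S 1 = T 1) (hI : S Complex.I = T Complex.I) : S = T := by
  apply ContinuousLinearMap.ext
  intro w
  have hw : w = (w.re : ℝ) • (1:ℂ) + (w.im : ℝ) • Complex.I := by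
    rw [Complex.real_smul, Complex.real_smul, mul_one, Complex.re_add_im w]
  rw [hw, map_add, map_smul, map_smul, map_add, map_smul, map_smul, h1, hI]

noncomputable def phiAux : (ℂ →L[ℝ] ℝ) →L[ℝ] ℂ :=
  Complex.ofRealCLM.comp (ContinuousLinearMap.apply ℝ ℝ (1:ℂ)) -
    Complex.I • (Complex.ofRealCLM.comp (ContinuousLinearMap.apply ℝ ℝ (Complex.I)))

lemma phiAux_apply (L : ℂ →L[ℝ] ℝ) : phiAux L = (L 1 : ℂ) - (L Complex.I : ℂ) * Complex.I := by
  simp [phiAux, mul_comm]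

lemma CR (u : ℂ → ℝ) (hsmooth : ContDiffOn ℝ 2 u (ball (0:ℂ) 1))
    (hharm : ∀ z ∈ ball (0:ℂ) 1, laplacian u z = 0) :
    DifferentiableOn ℂ (fun z => (fderiv ℝ u z 1 : ℂ) - (fderiv ℝ u z Complex.I : ℂ) * Complex.I)
      (ball (0:ℂ) 1) := by
  intro z₀ hz₀
  have hball : ball (0:ℂ) 1 ∈ nhds z₀ := (isOpen_ball).mem_nhds hz₀
  have hcd : ContDiffAt ℝ 2 u z₀ := (hsmooth z₀ hz₀).contDiffAt hball
  have hD : DifferentiableAt ℝ (fderiv ℝ u) z₀ := by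
    have := hcd.fderiv_right (m := 1) (by norm_num)
    exact this.differentiableAt (by norm_num)
  set H := fderiv ℝ (fderiv ℝ u) z₀ with hHdef
  have hsymm : ∀ v w : ℂ, H v w = H w v := fun v w =>
    (hcd.isSymmSndFDerivAt (by norm_num)) v w
  -- compute laplacian in terms of H
  have happ : ∀ v : ℂ, fderiv ℝ (fun w => fderiv ℝ u w v) z₀ =
      (ContinuousLinearMap.apply ℝ ℝ v).comp H := by
    intro v
    have : HasFDerivAt (fun w => fderiv ℝ u w v)
        ((ContinuousLinearMap.apply ℝ ℝ v).comp H) z₀ :=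
      ((ContinuousLinearMap.apply ℝ ℝ v).hasFDerivAt).comp z₀ hD.hasFDerivAt
    exact this.fderiv
  have hlap : H 1 1 + H Complex.I Complex.I = 0 := by
    have := hharm z₀ hz₀
    rw [laplacian, happ 1, happ Complex.I] at this
    simpa using this
  -- f = phiAux ∘ fderiv u
  have hfd : HasFDerivAt
      (fun z => (fderiv ℝ u z 1 : ℂ) - (fderiv ℝ u z Complex.I : ℂ) * Complex.I)
      (phiAux.comp H) z₀ := by
    have : HasFDerivAt (fun z => phiAux (fderiv ℝ u z)) (phiAux.comp H) z₀ :=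
      (phiAux.hasFDerivAt).comp z₀ hD.hasFDerivAt
    simpa only [phiAux_apply] using this
  -- the derivative is ℂ-linear
  set c : ℂ := (phiAux.comp H) 1 with hc
  have hlin : ((c • (ContinuousLinearMap.id ℂ ℂ)).restrictScalars ℝ) = phiAux.comp H := by
    apply ContinuousLinearMap.ext
    intro w
    have hw : w = (w.re : ℝ) • (1:ℂ) + (w.im : ℝ) • Complex.I := by
      rw [Complex.real_smul, Complex.real_smul, mul_one, Complex.re_add_im w]
    have key : (phiAux.comp H) Complex.I = c * Complex.I := by
      rw [hc]
      simp only [ContinuousLinearMap.comp_apply, phiAux_apply]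
      have h1 : H Complex.I 1 = H 1 Complex.I := hsymm _ _
      have h2 : H Complex.I Complex.I = -(H 1 1) := by linarith [hlap]
      rw [h1, h2]
      push_cast
      have : (Complex.I : ℂ) * Complex.I = -1 := Complex.I_mul_I
      linear_combination (↑((H 1) Complex.I) : ℂ) * this
    have lhs : ((c • (ContinuousLinearMap.id ℂ ℂ)).restrictScalars ℝ) w = c * w := by
      simp [smul_eq_mul]
    rw [lhs, hw, map_add, map_smul, map_smul, key, ← hc]
    simp only [Complex.real_smul]
    ring
  have : HasFDerivAt (𝕜 := ℂ)
      (fun z => (fderiv ℝ u z 1 : ℂ) - (fderiv ℝ u z Complex.I : ℂ) * Complex.I)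
      (c • (ContinuousLinearMap.id ℂ ℂ)) z₀ :=
    hasFDerivAt_of_restrictScalars ℝ hfd hlin
  exact this.differentiableAt.differentiableWithinAt
lemma primitive_exists (f : ℂ → ℂ) (hf : DifferentiableOn ℂ f (ball (0:ℂ) 1))
    (R : ℝ) (hR0 : 0 < R) (hR1 : R < 1) :
    ∃ h : ℂ → ℂ, h 0 = 0 ∧ ∀ z ∈ ball (0:ℂ) R, HasDerivAt h (f z) z := by
  set R₂ : ℝ≥0 := ⟨(1+R)/2, by linarith⟩ with hR₂
  have hR₂R : R < (R₂:ℝ) := by show R < (1+R)/2; linarith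
  have hR₂1 : (R₂:ℝ) < 1 := by show (1+R)/2 < 1; linarith
  have hsub : closedBall (0:ℂ) R₂ ⊆ ball (0:ℂ) 1 := by
    intro z hz
    simp only [mem_closedBall, mem_ball] at *
    linarith
  have hp : HasFPowerSeriesOnBall f (cauchyPowerSeries f 0 R₂) 0 R₂ :=
    (hf.mono hsub).hasFPowerSeriesOnBall (by exact_mod_cast hR0.trans hR₂R)
  set p := cauchyPowerSeries f 0 R₂ with hpdef
  set a : ℕ → ℂ := fun n => p.coeff n with hadef
  have hrad : ((R.toNNReal : ℝ≥0) : ℝ≥0∞) < p.radius := by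
    refine lt_of_lt_of_le ?_ hp.r_le
    rw [ENNReal.coe_lt_coe, ← NNReal.coe_lt_coe, Real.coe_toNNReal R hR0.le]
    exact hR₂R
  have hu : Summable (fun n => ‖a n‖ * R^n) := by
    have := p.summable_norm_mul_pow hrad
    simpa [hadef, Real.coe_toNNReal R hR0.le] using this
  set g : ℕ → ℂ → ℂ := fun n z => (a n / (n+1)) * z^(n+1) with hgdef
  set g' : ℕ → ℂ → ℂ := fun n z => a n * z^n with hg'def
  have hg : ∀ n y, y ∈ ball (0:ℂ) R → HasDerivAt (g n) (g' n y) y := by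
    intro n y _
    have h1 : HasDerivAt (fun z : ℂ => z^(n+1)) ((n+1) * y^n) y := by
      simpa using hasDerivAt_pow (n+1) y
    have h2 := h1.const_mul (a n / (n+1))
    have hne : ((n:ℂ)+1) ≠ 0 := Nat.cast_add_one_ne_zero n
    refine h2.congr_deriv ?_
    show _ = a n * y^n
    field_simp
  have hg' : ∀ n y, y ∈ ball (0:ℂ) R → ‖g' n y‖ ≤ ‖a n‖ * R^n := by
    intro n y hy
    simp only [mem_ball, dist_zero_right] at hy
    calc ‖g' n y‖ = ‖a n‖ * ‖y‖^n := by simp [hg'def]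
    _ ≤ ‖a n‖ * R^n := by
        gcongr
        
  have h0mem : (0:ℂ) ∈ ball (0:ℂ) R := by simpa using hR0
  have hg0 : Summable (fun n => g n 0) := by
    have : (fun n => g n 0) = fun _ => (0:ℂ) := by
      funext n; simp [hgdef]
    rw [this]; exact summable_zero
  refine ⟨fun z => ∑' n, g n z, ?_, ?_⟩
  · have h0 : ∀ n, g n 0 = 0 := fun n => by simp [hgdef]
    simp [h0]
  · intro z hz
    have hd := hasDerivAt_tsum_of_isPreconnected hu isOpen_ball
      (convex_ball _ _).isPreconnected hg hg' h0mem hg0 hz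
    have hsum : HasSum (fun n => g' n z) (f z) := by
      have hzmem : z ∈ Metric.eball (0:ℂ) R₂ := by
        simp only [mem_ball, dist_zero_right] at hz
        rw [mem_emetric_ball_zero_iff]
        rw [show ((R₂:ℝ≥0∞)) = ((R₂:ℝ≥0):ℝ≥0∞) from rfl, enorm_eq_nnnorm, ENNReal.coe_lt_coe,
          ← NNReal.coe_lt_coe, coe_nnnorm]
        linarith
      have := hp.hasSum hzmem
      simp only [zero_add] at this
      refine (show (fun n => g' n z) = fun n => (p n) fun _ => z from funext fun n => ?_) ▸ this
      rw [FormalMultilinearSeries.apply_eq_pow_smul_coeff, smul_eq_mul]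
      show p.coeff n * z^n = _
      ring
    rw [hsum.tsum_eq] at hd
    exact hd
lemma harnack_of_holo (h : ℂ → ℂ) (R A : ℝ) (hR : 0 < R) (hA : 0 < A)
    (hd : DifferentiableOn ℂ h (ball (0:ℂ) R))
    (h0 : h 0 = (A:ℂ))
    (hre : ∀ z ∈ ball (0:ℂ) R, 0 < (h z).re) :
    ∀ z ∈ ball (0:ℂ) R, (A/4) * (1 - ‖z‖ / R) ≤ (h z).re := by
  set a : ℂ := (A:ℂ) with hadef
  have hne : ∀ z ∈ ball (0:ℂ) R, h z + a ≠ 0 := by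
    intro z hz hcon
    have : (h z + a).re = 0 := by rw [hcon]; simp
    simp only [Complex.add_re, hadef, Complex.ofReal_re] at this
    have := hre z hz
    linarith
  set g : ℂ → ℂ := fun z => (h z - a)/(h z + a) with hgdef
  have hgd : DifferentiableOn ℂ g (ball (0:ℂ) R) :=
    (hd.sub (differentiableOn_const a)).div (hd.add (differentiableOn_const a)) hne
  have hg0 : g 0 = 0 := by
    have h0mem : (0:ℂ) ∈ ball (0:ℂ) R := by simpa using hR
    simp [hgdef, h0]
  have habs : ∀ z ∈ ball (0:ℂ) R, ‖h z - a‖ < ‖h z + a‖ := by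
    intro z hz
    have hrez := hre z hz
    apply lt_of_pow_lt_pow_left₀ 2 (norm_nonneg _)
    rw [Complex.sq_norm, Complex.sq_norm]
    simp only [Complex.normSq_apply, Complex.sub_re, Complex.sub_im, Complex.add_re,
      Complex.add_im, hadef, Complex.ofReal_re, Complex.ofReal_im]
    nlinarith
  have hmaps : Set.MapsTo g (ball (0:ℂ) R) (ball (g 0) 1) := by
    intro z hz
    rw [hg0, mem_ball, dist_zero_right]
    rw [hgdef]
    simp only [norm_div]
    rw [div_lt_one (lt_of_le_of_lt (norm_nonneg _) (habs z hz))]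
    exact habs z hz
  intro z hz
  have hschwarz := Complex.dist_le_div_mul_dist_of_mapsTo_ball hgd (hmaps.mono_right ball_subset_closedBall) hz
  rw [hg0, dist_zero_right, dist_zero_right] at hschwarz
  -- ‖g z‖ ≤ 1/R * ‖z‖
  set t : ℝ := ‖z‖ / R with htdef
  have ht0 : 0 ≤ t := div_nonneg (norm_nonneg _) hR.le
  have hgz : ‖h z - a‖ ≤ t * ‖h z + a‖ := by
    have h1 : ‖g z‖ ≤ t := by
      rw [htdef]
      calc (‖g z‖ : ℝ) = ‖g z‖ := rfl
      _ ≤ 1/R * ‖z‖ := hschwarz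
      _ = ‖z‖ / R := by ring
    have h2 : ‖g z‖ = ‖h z - a‖ / ‖h z + a‖ := by
      rw [hgdef]; simp [norm_div]
    rw [h2] at h1
    rw [div_le_iff₀ (lt_of_le_of_lt (norm_nonneg _) (habs z hz))] at h1
    exact h1
  have hsq : (‖h z - a‖)^2 ≤ t^2 * (‖h z + a‖)^2 := by
    have := mul_self_le_mul_self (norm_nonneg _) hgz
    calc (‖h z - a‖)^2 = ‖h z - a‖ * ‖h z - a‖ := sq _
    _ ≤ (t * ‖h z + a‖) * (t * ‖h z + a‖) := this
    _ = t^2 * (‖h z + a‖)^2 := by ring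
  rw [Complex.sq_norm, Complex.sq_norm] at hsq
  simp only [Complex.normSq_apply, Complex.sub_re, Complex.sub_im, Complex.add_re,
    Complex.add_im, hadef, Complex.ofReal_re, Complex.ofReal_im] at hsq
  have hrez := hre z hz
  by_cases ht1 : 1 ≤ t
  · have : (A/4) * (1 - t) ≤ 0 := by nlinarith
    linarith
  · push_neg at ht1
    have h1t : 0 < 1 - t^2 := by nlinarith
    have k1 : (1 - t^2) * ((h z).re^2 + (h z).im^2 + A^2) ≤ 4 * (A * (h z).re) := by
      nlinarith [hsq, mul_nonneg (mul_pos hA hrez).le h1t.le]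
    have k2 : (1 - t^2) * A^2 ≤ (1 - t^2) * ((h z).re^2 + (h z).im^2 + A^2) := by
      nlinarith [mul_nonneg h1t.le (add_nonneg (sq_nonneg (h z).re) (sq_nonneg (h z).im))]
    nlinarith [k1, k2, hA, mul_pos hA hA, mul_nonneg (mul_nonneg hA.le ht0) (sub_nonneg.mpr ht1.le)]

end Aux

theorem hopf_lemma_unit_disc
    (u : ℂ → ℝ)
    (hcont : ContinuousOn u (closedBall (0:ℂ) 1))
    (hsmooth : ContDiffOn ℝ 2 u (ball (0:ℂ) 1))
    (hharm : ∀ z ∈ ball (0:ℂ) 1, laplacian u z = 0)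
    (hnonconst : ¬ ∀ z ∈ ball (0:ℂ) 1, ∀ w ∈ ball (0:ℂ) 1, u z = u w)
    (hpos : ∀ z ∈ ball (0:ℂ) 1, 0 < u z)
    (P : ℂ) (hP : ‖P‖ = 1) (hP0 : u P = 0) :
    ∃ c' > (0:ℝ), ∃ r₀ : ℝ, r₀ < 1 ∧
      ∀ r : ℝ, r₀ < r → r < 1 → (u ((r : ℂ) * P) - u P) / (r - 1) ≤ -c' := by
  have h0mem : (0:ℂ) ∈ ball (0:ℂ) 1 := by simp
  have hu0 : 0 < u 0 := hpos 0 h0mem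
  set f : ℂ → ℂ := fun z => (fderiv ℝ u z 1 : ℂ) - (fderiv ℝ u z Complex.I : ℂ) * Complex.I
    with hfdef
  have hfdiff : DifferentiableOn ℂ f (ball (0:ℂ) 1) := CR u hsmooth hharm
  -- the key estimate
  have key : ∀ r : ℝ, 1/2 < r → r < 1 → (u 0/8) * (1 - r) ≤ u ((r:ℂ)*P) := by
    intro r hr2 hr1
    set R : ℝ := (1+r)/2 with hRdef
    have hR0 : 0 < R := by rw [hRdef]; linarith
    have hR1 : R < 1 := by rw [hRdef]; linarith
    have hrR : r < R := by rw [hRdef]; linarith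
    obtain ⟨h₀, h₀0, h₀d⟩ := primitive_exists f hfdiff R hR0 hR1
    set h : ℂ → ℂ := fun z => (u 0 : ℂ) + h₀ z with hhdef
    have hh0 : h 0 = (u 0 : ℂ) := by simp [hhdef, h₀0]
    have hhd : ∀ z ∈ ball (0:ℂ) R, HasDerivAt h (f z) z := by
      intro z hz
      exact (h₀d z hz).const_add _
    have hsubR : ball (0:ℂ) R ⊆ ball (0:ℂ) 1 := ball_subset_ball hR1.le
    -- Re h = u on ball 0 R
    have hrehu : ∀ z ∈ ball (0:ℂ) R, (h z).re = u z := by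
      set v : ℂ → ℝ := fun z => (h z).re - u z with hvdef
      have hv0 : v 0 = 0 := by simp [hvdef, hh0]
      have hvd : ∀ z ∈ ball (0:ℂ) R, HasFDerivAt v (0 : ℂ →L[ℝ] ℝ) z := by
        intro z hz
        have hT : HasFDerivAt h
            ((ContinuousLinearMap.smulRight (1:ℂ →L[ℂ] ℂ) (f z)).restrictScalars ℝ) z :=
          ((hasDerivAt_iff_hasFDerivAt.mp (hhd z hz))).restrictScalars ℝ
        have hre : HasFDerivAt (fun w => (h w).re)
            (Complex.reCLM.comp
              ((ContinuousLinearMap.smulRight (1:ℂ →L[ℂ] ℂ) (f z)).restrictScalars ℝ)) z :=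
          (Complex.reCLM.hasFDerivAt).comp z hT
        have hud : DifferentiableAt ℝ u z := by
          have : ContDiffAt ℝ 2 u z :=
            (hsmooth z (hsubR hz)).contDiffAt (isOpen_ball.mem_nhds (hsubR hz))
          exact this.differentiableAt (by norm_num)
        have hsub : HasFDerivAt v
            (Complex.reCLM.comp
              ((ContinuousLinearMap.smulRight (1:ℂ →L[ℂ] ℂ) (f z)).restrictScalars ℝ)
              - fderiv ℝ u z) z := hre.sub hud.hasFDerivAt
        have hzero : (Complex.reCLM.comp
              ((ContinuousLinearMap.smulRight (1:ℂ →L[ℂ] ℂ) (f z)).restrictScalars ℝ)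
              - fderiv ℝ u z) = 0 := by
          rw [sub_eq_zero]
          apply clm_complex_ext (F := ℝ)
          · simp [hfdef]
          · simp [hfdef]
        rwa [hzero] at hsub
      have hconst : ∀ z ∈ ball (0:ℂ) R, v z = v 0 := by
        intro z hz
        have h0m : (0:ℂ) ∈ ball (0:ℂ) R := by simpa using hR0
        refine (convex_ball (0:ℂ) R).is_const_of_fderivWithin_eq_zero
          (fun w hw => ((hvd w hw).differentiableAt).differentiableWithinAt) ?_ hz h0m
        intro w hw
        rw [fderivWithin_eq_fderiv (isOpen_ball.uniqueDiffWithinAt hw)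
          ((hvd w hw).differentiableAt)]
        exact (hvd w hw).fderiv
      intro z hz
      have := hconst z hz
      rw [hv0] at this
      simpa [hvdef, sub_eq_zero] using this
    -- apply Harnack
    have hholo : DifferentiableOn ℂ h (ball (0:ℂ) R) := fun z hz =>
      ((hhd z hz).differentiableAt).differentiableWithinAt
    have hrepos : ∀ z ∈ ball (0:ℂ) R, 0 < (h z).re := by
      intro z hz
      rw [hrehu z hz]
      exact hpos z (hsubR hz)
    have harnack := harnack_of_holo h R (u 0) hR0 hu0 hholo hh0 hrepos
    have hrPmem : ((r:ℂ)*P) ∈ ball (0:ℂ) R := by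
      rw [mem_ball, dist_zero_right]
      have : ‖(r:ℂ)*P‖ = r := by
        rw [norm_mul, Complex.norm_real, hP, mul_one,
          Real.norm_eq_abs, abs_of_pos (by linarith)]
      rw [this]; exact hrR
    have habsrP : ‖(r:ℂ)*P‖ = r := by
      rw [norm_mul, Complex.norm_real, hP, mul_one, Real.norm_eq_abs, abs_of_pos (by linarith)]
    have := harnack ((r:ℂ)*P) hrPmem
    rw [hrehu _ hrPmem, habsrP] at this
    have harith : (u 0/8) * (1 - r) ≤ (u 0/4) * (1 - r / R) := by
      have h3 : (1-r)/2 ≤ 1 - r/R := by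
        have he : (1:ℝ) - r/R = ((1-r)/2)/R := by
          field_simp
          rw [hRdef]; ring
        rw [he, le_div_iff₀ hR0]
        nlinarith
      nlinarith [h3, hu0]
    linarith
  refine ⟨u 0/8, by positivity, 1/2, by norm_num, ?_⟩
  intro r hr2 hr1
  rw [hP0, sub_zero, div_le_iff_of_neg (by linarith)]
  have := key r hr2 hr1
  nlinarith
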